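/- Let k ≥ 2 be an integer, p_k := log₂ C(2k,k), and define c_k(x) := (1−x)^{2p_k/k} x (1+(p_k−1)x) + x^{2p_k/k} (1−x)(1+(p_k−1)(1−x)) − (1−x)^{p_k/k} x^{p_k/k} (p_k − 2(p_k−1)(1−x)x) for x ∈ (0,1). Then c_k(x) < 0 for every x ∈ [1/10, 1/2). -/

import Mathlib

open Real


lemma cb_one : Nat.centralBinom 1 = 2 := by decide

lemma cb_upper : ∀ k : ℕ, 1 ≤ k → ((Nat.centralBinom k : ℝ))^2 * (3*k+1) ≤ 16^k := by
  intro k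
  induction k with
  | zero => intro h; exact absurd h (by norm_num)
  | succ n ih =>
    intro _
    rcases Nat.eq_zero_or_pos n with h | h
    · subst h; norm_num [cb_one]
    · have IH := ih h
      have hrecR : ((n:ℝ)+1) * Nat.centralBinom (n+1) = 2*(2*n+1) * Nat.centralBinom n := by
        exact_mod_cast Nat.succ_mul_centralBinom_succ n
      have hpos : (0:ℝ) < ((n:ℝ)+1)^2 * (3*n+1) := by positivity
      rw [← mul_le_mul_iff_right₀ hpos]
      push_cast
      have hsq : (((n:ℝ)+1) * Nat.centralBinom (n+1))^2 = (2*(2*n+1) * Nat.centralBinom n)^2 := by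
        rw [hrecR]
      have hkey : (4:ℝ)*(2*n+1)^2*(3*(n+1)+1) ≤ 16*((n:ℝ)+1)^2*(3*n+1) := by nlinarith [h]
      calc ((n:ℝ)+1)^2 * (3*n+1) * ((Nat.centralBinom (n+1):ℝ)^2 * (3*(n+1)+1))
          = (3*(n:ℝ)+1) * (3*((n:ℝ)+1)+1) * (((n:ℝ)+1) * Nat.centralBinom (n+1))^2 := by
            push_cast; ring
        _ = (3*(n:ℝ)+1) * (3*((n:ℝ)+1)+1) * (2*(2*n+1) * Nat.centralBinom n)^2 := by rw [hsq]
        _ = (4*(2*(n:ℝ)+1)^2*(3*((n:ℝ)+1)+1)) * (((Nat.centralBinom n:ℝ))^2 * (3*n+1)) := by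
            push_cast; ring
        _ ≤ (4*(2*(n:ℝ)+1)^2*(3*((n:ℝ)+1)+1)) * 16^n :=
            mul_le_mul_of_nonneg_left IH (by positivity)
        _ ≤ (16*((n:ℝ)+1)^2*(3*(n:ℝ)+1)) * 16^n := by
            apply mul_le_mul_of_nonneg_right ?_ (by positivity)
            push_cast at hkey ⊢; nlinarith
        _ = ((n:ℝ)+1)^2 * (3*(n:ℝ)+1) * 16^(n+1) := by ring

lemma cb_lower : ∀ k : ℕ, 1 ≤ k → (16:ℝ)^k ≤ 4*k*((Nat.centralBinom k : ℝ))^2 := by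
  intro k
  induction k with
  | zero => intro h; exact absurd h (by norm_num)
  | succ n ih =>
    intro _
    rcases Nat.eq_zero_or_pos n with h | h
    · subst h; norm_num [cb_one]
    · have IH := ih h
      have hrecR : ((n:ℝ)+1) * Nat.centralBinom (n+1) = 2*(2*n+1) * Nat.centralBinom n := by
        exact_mod_cast Nat.succ_mul_centralBinom_succ n
      have hpos : (0:ℝ) < (n:ℝ)*((n:ℝ)+1) := by positivity
      rw [← mul_le_mul_iff_right₀ hpos]
      have hsq : (((n:ℝ)+1) * Nat.centralBinom (n+1))^2 = (2*(2*n+1) * Nat.centralBinom n)^2 := by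
        rw [hrecR]
      have hnR : (1:ℝ) ≤ (n:ℝ) := by exact_mod_cast h
      have hkey : (4:ℝ)*(n:ℝ)*((n:ℝ)+1) ≤ (2*(n:ℝ)+1)^2 := by nlinarith
      calc (n:ℝ)*((n:ℝ)+1) * (16:ℝ)^(n+1)
          = (4*(n:ℝ)*((n:ℝ)+1)) * (4 * 16^n) := by ring
        _ ≤ (2*(n:ℝ)+1)^2 * (4 * 16^n) :=
            mul_le_mul_of_nonneg_right hkey (by positivity)
        _ ≤ (2*(n:ℝ)+1)^2 * (4 * (4*n*((Nat.centralBinom n : ℝ))^2)) := by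
            apply mul_le_mul_of_nonneg_left ?_ (by positivity)
            nlinarith [IH]
        _ = (n:ℝ) * (4 * (2*(2*(n:ℝ)+1) * Nat.centralBinom n)^2) := by push_cast; ring
        _ = (n:ℝ) * (4 * (((n:ℝ)+1) * Nat.centralBinom (n+1))^2) := by
            rw [show (2*(2*(n:ℝ)+1) * Nat.centralBinom n)^2 = (2*(2*(n:ℕ)+1) * Nat.centralBinom n:ℝ)^2 by push_cast; ring, ← hsq]
        _ = (n:ℝ)*((n:ℝ)+1) * (4*(((n:ℕ)+1:ℕ):ℝ)*((Nat.centralBinom (n+1) : ℝ))^2) := by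
            push_cast; ring

lemma logb_nat_ge (C m q : ℕ) (hq : 0 < q) (h : 2^m ≤ C^q) : (m:ℝ)/q ≤ Real.logb 2 C := by
  have hC : 1 ≤ C := by
    rcases Nat.eq_zero_or_pos C with h0 | h0
    · subst h0
      rw [Nat.zero_pow (by omega)] at h
      have h2 : 0 < 2^m := Nat.two_pow_pos m
      omega
    · exact h0
  have hlog : (m:ℝ) * Real.log 2 ≤ (q:ℝ) * Real.log C := by
    have := Real.log_le_log (by positivity) (show ((2:ℝ))^m ≤ (C:ℝ)^q by exact_mod_cast h)
    rwa [Real.log_pow, Real.log_pow] at this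
  have h2 : (0:ℝ) < Real.log 2 := Real.log_pos (by norm_num)
  rw [Real.logb, div_le_div_iff₀ (by exact_mod_cast hq) h2]
  linarith

lemma logb_nat_le (C m q : ℕ) (hq : 0 < q) (hC : 1 ≤ C) (h : C^q ≤ 2^m) : Real.logb 2 C ≤ (m:ℝ)/q := by
  have hlog : (q:ℝ) * Real.log C ≤ (m:ℝ) * Real.log 2 := by
    have := Real.log_le_log (show (0:ℝ) < (C:ℝ)^q by positivity)
      (show ((C:ℝ))^q ≤ (2:ℝ)^m by exact_mod_cast h)
    rwa [Real.log_pow, Real.log_pow] at this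
  have h2 : (0:ℝ) < Real.log 2 := Real.log_pos (by norm_num)
  rw [Real.logb, div_le_div_iff₀ h2 (by exact_mod_cast hq)]
  linarith
lemma rpow_nine_le {p q : ℕ} {R : ℝ} (hR : 0 ≤ R) (hq : 0 < q) (h : (9:ℝ)^p ≤ R^q) :
    (9:ℝ)^((p:ℝ)/q) ≤ R := by
  have h9 : (0:ℝ) ≤ 9 := by norm_num
  apply le_of_pow_le_pow_left₀ hq.ne' hR
  calc ((9:ℝ)^((p:ℝ)/q))^q = (9:ℝ)^(((p:ℝ)/q)*q) := by
        rw [← Real.rpow_natCast ((9:ℝ)^((p:ℝ)/q)) q, ← Real.rpow_mul h9]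
    _ = (9:ℝ)^(p:ℝ) := by rw [div_mul_cancel₀]; exact_mod_cast hq.ne'
    _ = (9:ℝ)^p := by rw [Real.rpow_natCast]
    _ ≤ R^q := h

lemma reduce {u um θ θp R : ℝ} (hum : 0 ≤ um) (hu : um ≤ u) (hθ : θ ≤ θp)
    (hR9 : (9:ℝ)^θp ≤ R) (hR : R ≤ 9) (hfinal : R*(1+um/10) < 1+9*um/10) :
    (9:ℝ)^θ * (1+u/10) < 1+9*u/10 := by
  have h1 : (9:ℝ)^θ ≤ R := le_trans (Real.rpow_le_rpow_of_exponent_le (by norm_num) hθ) hR9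
  have hpos : (0:ℝ) < 1+u/10 := by linarith
  nlinarith [mul_le_mul_of_nonneg_right h1 hpos.le,
    mul_nonneg (sub_nonneg.2 hu) (sub_nonneg.2 hR)]

lemma log_nine_ge : (219/100 : ℝ) ≤ Real.log 9 := by
  have h2 : (0.6931471803 : ℝ) < Real.log 2 := Real.log_two_gt_d9
  have h98 : Real.log (8/9 : ℝ) ≤ 8/9 - 1 := Real.log_le_sub_one_of_pos (by norm_num)
  have h9 : Real.log (9:ℝ) = 3 * Real.log 2 + Real.log (9/8 : ℝ) := by
    rw [show (9:ℝ) = 2^3 * (9/8) by norm_num, Real.log_mul (by norm_num) (by norm_num),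
      Real.log_pow]
    push_cast; ring
  have hinv : Real.log (9/8 : ℝ) = - Real.log (8/9 : ℝ) := by
    rw [show (9/8 : ℝ) = (8/9)⁻¹ by norm_num, Real.log_inv]
  rw [h9, hinv]
  linarith

lemma sq_le_two_pow (k : ℕ) (hk : 4 ≤ k) : k^2 ≤ 2^k := by
  induction k with
  | zero => omega
  | succ n ih =>
    rcases Nat.lt_or_ge n 4 with h | h
    · interval_cases n <;> simp_all
    · have := ih (by omega)
      have h2 : 2^(n+1) = 2 * 2^n := by ring
      nlinarith

lemma poly_claim (k L : ℝ) (hk : 7 ≤ k) (hL1 : 14/5 ≤ L) (hL2 : L ≤ k/2) :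
    9*(1+(2*k-2-L/2)/10) < (1+9*(2*k-2-L/2)/10)*(1+(219/100)*((198/125+L)/2)/k/2)^2 := by
  have hk0 : (0:ℝ) < k := by linarith
  have h1 : (1+(219/100)*((198/125+L)/2)/k/2) = (k + (219/400)*(198/125+L))/k := by
    field_simp; ring
  rw [h1, div_pow, mul_div_assoc', lt_div_iff₀ (by positivity)]
  nlinarith [sq_nonneg (k-7), sq_nonneg (L-14/5), mul_pos hk0 hk0, sq_nonneg k, sq_nonneg L,
    mul_nonneg (sub_nonneg.2 hL1) (sub_nonneg.2 hL2), mul_nonneg (sub_nonneg.2 hk) (sub_nonneg.2 hL1),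
    mul_nonneg (sub_nonneg.2 hk) (sub_nonneg.2 hL2), sq_nonneg (k - 2*L)]

lemma endpoint (k : ℕ) (hk : 2 ≤ k)
    (hlo : 2*(k:ℝ) - 1 - Real.logb 2 k / 2 ≤ Real.logb 2 ((2*k).choose k))
    (hup : Real.logb 2 ((2*k).choose k) ≤ 2*(k:ℝ) - Real.logb 2 (3*(k:ℝ)+1) / 2) :
    (9:ℝ)^(Real.logb 2 ((2*k).choose k)/(k:ℝ) - 1) * (1 + (Real.logb 2 ((2*k).choose k) - 1)/10)
      < 1 + 9*(Real.logb 2 ((2*k).choose k) - 1)/10 := by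
  rcases Nat.lt_or_ge k 7 with h7 | h7
  · -- special cases k = 2..6
    interval_cases k
    · have hC : ((2*2).choose 2 : ℕ) = 6 := by decide
      rw [hC]
      have hs1 := logb_nat_ge 6 5 2 (by norm_num) (by norm_num)
      have hs2 := logb_nat_le 6 13 5 (by norm_num) (by norm_num) (by norm_num)
      have hr := rpow_nine_le (p := 3) (q := 10) (R := 97/50) (by norm_num) (by norm_num) (by norm_num)
      push_cast at hs1 hs2 hr ⊢
      refine reduce (um := 3/2) (θp := 3/10) (R := 97/50) (by norm_num) (by linarith)
        (by linarith) ?_ (by norm_num) (by norm_num)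
      convert hr using 2
    · have hC : ((2*3).choose 3 : ℕ) = 20 := by decide
      rw [hC]
      have hs1 := logb_nat_ge 20 17 4 (by norm_num) (by norm_num)
      have hs2 := logb_nat_le 20 87 20 (by norm_num) (by norm_num) (by norm_num)
      have hr := rpow_nine_le (p := 9) (q := 20) (R := 27/10) (by norm_num) (by norm_num) (by norm_num)
      push_cast at hs1 hs2 hr ⊢
      refine reduce (um := 13/4) (θp := 9/20) (R := 27/10) (by norm_num) (by linarith)
        (by linarith) ?_ (by norm_num) (by norm_num)
      convert hr using 2
    · have hC : ((2*4).choose 4 : ℕ) = 70 := by decide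
      rw [hC]
      have hs1 := logb_nat_ge 70 61 10 (by norm_num) (by norm_num)
      have hs2 := logb_nat_le 70 62 10 (by norm_num) (by norm_num) (by norm_num)
      have hr := rpow_nine_le (p := 11) (q := 20) (R := 84/25) (by norm_num) (by norm_num) (by norm_num)
      push_cast at hs1 hs2 hr ⊢
      refine reduce (um := 51/10) (θp := 11/20) (R := 84/25) (by norm_num) (by linarith)
        (by linarith) ?_ (by norm_num) (by norm_num)
      convert hr using 2
    · have hC : ((2*5).choose 5 : ℕ) = 252 := by decide
      rw [hC]
      have hs1 := logb_nat_ge 252 159 20 (by norm_num) (by norm_num)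
      have hs2 := logb_nat_le 252 8 1 (by norm_num) (by norm_num) (by norm_num)
      have hr := rpow_nine_le (p := 3) (q := 5) (R := 187/50) (by norm_num) (by norm_num) (by norm_num)
      push_cast at hs1 hs2 hr ⊢
      refine reduce (um := 139/20) (θp := 3/5) (R := 187/50) (by norm_num) (by linarith)
        (by linarith) ?_ (by norm_num) (by norm_num)
      convert hr using 2
    · have hC : ((2*6).choose 6 : ℕ) = 924 := by decide
      rw [hC]
      have hs1 := logb_nat_ge 924 98 10 (by norm_num) (by norm_num)
      have hs2 := logb_nat_le 924 99 10 (by norm_num) (by norm_num) (by norm_num)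
      have hr := rpow_nine_le (p := 13) (q := 20) (R := 209/50) (by norm_num) (by norm_num) (by norm_num)
      push_cast at hs1 hs2 hr ⊢
      refine reduce (um := 44/5) (θp := 13/20) (R := 209/50) (by norm_num) (by linarith)
        (by linarith) ?_ (by norm_num) (by norm_num)
      convert hr using 2
  · -- generic k ≥ 7
    set s : ℝ := Real.logb 2 ((2*k).choose k) with hs
    clear_value s
    have hkR : (7:ℝ) ≤ (k:ℝ) := by exact_mod_cast h7
    have hk0 : (0:ℝ) < (k:ℝ) := by linarith
    set L : ℝ := Real.logb 2 (k:ℝ) with hL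
    clear_value L
    have hL1 : (14/5:ℝ) ≤ L := by
      have h75 : (14/5:ℝ) ≤ Real.logb 2 ((7:ℕ):ℝ) := logb_nat_ge 7 14 5 (by norm_num) (by norm_num)
      have hm : Real.logb 2 ((7:ℕ):ℝ) ≤ Real.logb 2 (k:ℝ) :=
        Real.logb_le_logb_of_le (by norm_num) (by norm_num) (by exact_mod_cast h7)
      push_cast at h75 hm
      rw [hL]; linarith
    have hL2 : L ≤ (k:ℝ)/2 := by
      have hsq : ((k:ℝ))^2 ≤ (2:ℝ)^(k:ℕ) := by exact_mod_cast sq_le_two_pow k (by omega)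
      have hlogk : Real.log ((k:ℝ)^2) ≤ Real.log ((2:ℝ)^(k:ℕ)) :=
        Real.log_le_log (by positivity) hsq
      rw [Real.log_pow, Real.log_pow] at hlogk
      have h2 : (0:ℝ) < Real.log 2 := Real.log_pos (by norm_num)
      rw [hL, Real.logb, div_le_iff₀ h2]
      push_cast at hlogk
      nlinarith
    have hlog3 : (198/125 : ℝ) ≤ Real.logb 2 ((3:ℕ):ℝ) := by
      have h := logb_nat_ge 3 198 125 (by norm_num) (by norm_num)
      push_cast at h ⊢; linarith
    have h3k : Real.logb 2 ((3:ℕ):ℝ) + L ≤ Real.logb 2 (3*(k:ℝ)+1) := by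
      have hmul : Real.logb 2 ((3:ℝ)*(k:ℝ)) = Real.logb 2 (3:ℝ) + L := by
        rw [hL]; exact Real.logb_mul (by norm_num) (by positivity)
      have hmono : Real.logb 2 ((3:ℝ)*(k:ℝ)) ≤ Real.logb 2 (3*(k:ℝ)+1) :=
        Real.logb_le_logb_of_le (by norm_num) (by positivity) (by linarith)
      have : ((3:ℕ):ℝ) = (3:ℝ) := by norm_num
      rw [this]; linarith
    have hd : (198/125 + L)/2 ≤ 2*(k:ℝ) - s := by
      push_cast at hlog3 h3k
      linarith [hup]
    have hu : 2*(k:ℝ)-2-L/2 ≤ s - 1 := by linarith [hlo]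
    set Z : ℝ := (219/100) * ((198/125 + L)/2) / k with hZ
    clear_value Z
    have hZpos : (0:ℝ) < Z := by
      rw [hZ]; apply div_pos; · nlinarith
      · exact hk0
    have h1Z : (0:ℝ) < 1 + Z/2 := by linarith
    have hθ : s/(k:ℝ) - 1 ≤ 1 - ((198/125+L)/2)/(k:ℝ) := by
      have h2 : s/(k:ℝ) + ((198/125+L)/2)/(k:ℝ) ≤ 2 := by
        rw [← add_div, div_le_iff₀ hk0]
        linarith
      linarith
    have hR9 : (9:ℝ)^(1 - ((198/125+L)/2)/(k:ℝ)) ≤ 9/(1+Z/2)^2 := by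
      rw [Real.rpow_sub (by norm_num), Real.rpow_one]
      apply div_le_div_of_nonneg_left (by norm_num) (by positivity)
      have hZle : Z ≤ Real.log 9 * (((198/125+L)/2)/(k:ℝ)) := by
        rw [hZ]
        have hd0 : (0:ℝ) ≤ ((198/125+L)/2)/(k:ℝ) := by positivity
        have h9 := log_nine_ge
        calc (219/100) * ((198/125 + L)/2) / (k:ℝ)
            = (219/100) * (((198/125 + L)/2) / (k:ℝ)) := by ring
          _ ≤ Real.log 9 * (((198/125 + L)/2) / (k:ℝ)) :=
              mul_le_mul_of_nonneg_right h9 hd0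
      have hexp1 : 1 + Z/2 ≤ Real.exp (Z/2) := by
        have := Real.add_one_le_exp (Z/2); linarith
      calc (1+Z/2)^2 ≤ (Real.exp (Z/2))^2 := by
            apply pow_le_pow_left₀ h1Z.le hexp1
        _ = Real.exp Z := by rw [sq, ← Real.exp_add]; ring_nf
        _ ≤ Real.exp (Real.log 9 * (((198/125+L)/2)/(k:ℝ))) := Real.exp_le_exp.mpr hZle
        _ = (9:ℝ)^(((198/125+L)/2)/(k:ℝ)) := (Real.rpow_def_of_pos (by norm_num) _).symm
    have hRle9 : 9/(1+Z/2)^2 ≤ 9 := by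
      rw [div_le_iff₀ (by positivity)]
      nlinarith [hZpos]
    have hum : (0:ℝ) ≤ 2*(k:ℝ)-2-L/2 := by linarith
    have hfinal : (9/(1+Z/2)^2)*(1+(2*(k:ℝ)-2-L/2)/10) < 1+9*(2*(k:ℝ)-2-L/2)/10 := by
      rw [div_mul_eq_mul_div, div_lt_iff₀ (by positivity)]
      have h := poly_claim (k:ℝ) L hkR hL1 hL2
      rw [hZ]
      linarith [h]
    exact reduce hum hu hθ hR9 hRle9 hfinal

lemma F_hasDeriv (u θ : ℝ) (hu : 0 < u) {y : ℝ} (hy0 : 0 < y) (hy1 : y < 1) :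
    HasDerivAt (fun z => Real.log (1+u*(1-z)) - Real.log (1+u*z) - θ*(Real.log (1-z) - Real.log z))
      (θ/(1-y) + θ/y - u/(1+u*(1-y)) - u/(1+u*y)) y := by
  have h1y : (0:ℝ) < 1 - y := by linarith
  have hA : (0:ℝ) < 1 + u*(1-y) := by nlinarith
  have hB : (0:ℝ) < 1 + u*y := by nlinarith
  have d1 : HasDerivAt (fun z : ℝ => 1+u*(1-z)) (u * (0-1)) y :=
    (((hasDerivAt_const y (1:ℝ)).sub (hasDerivAt_id y)).const_mul u).const_add 1
  have l1 : HasDerivAt (fun z : ℝ => Real.log (1+u*(1-z))) ((u*(0-1))/(1+u*(1-y))) y :=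
    d1.log hA.ne'
  have d2 : HasDerivAt (fun z : ℝ => 1+u*z) (u * 1) y :=
    ((hasDerivAt_id y).const_mul u).const_add 1
  have l2 : HasDerivAt (fun z : ℝ => Real.log (1+u*z)) ((u*1)/(1+u*y)) y := d2.log hB.ne'
  have d3 : HasDerivAt (fun z : ℝ => 1-z) (0-1) y :=
    (hasDerivAt_const y (1:ℝ)).sub (hasDerivAt_id y)
  have l3 : HasDerivAt (fun z : ℝ => Real.log (1-z)) ((0-1)/(1-y)) y := d3.log h1y.ne'
  have l4 : HasDerivAt Real.log y⁻¹ y := Real.hasDerivAt_log hy0.ne'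
  have := (l1.sub l2).sub ((l3.sub l4).const_mul θ)
  refine this.congr_deriv ?_
  field_simp
  ring

lemma deriv_formula (u θ y : ℝ) (hu : 0 < u) (hy0 : 0 < y) (hy1 : y < 1) :
    θ/(1-y) + θ/y - u/(1+u*(1-y)) - u/(1+u*y)
      = (θ*(1+u) - y*(1-y)*(u^2+2*u-θ*u^2)) / (y*(1-y)*(1+u*(1-y))*(1+u*y)) := by
  have h1y : (0:ℝ) < 1 - y := by linarith
  have hA : (0:ℝ) < 1 + u*(1-y) := by nlinarith
  have hB : (0:ℝ) < 1 + u*y := by nlinarith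
  field_simp
  ring

set_option maxHeartbeats 1000000 in
lemma F_pos (u θ : ℝ) (hu : 0 < u)
    (hend : 0 < Real.log (1+u*(1-(1/10))) - Real.log (1+u*(1/10))
      - θ*(Real.log (1-(1/10)) - Real.log (1/10)))
    (x : ℝ) (hx1 : 1/10 ≤ x) (hx2 : x < 1/2) :
    0 < Real.log (1+u*(1-x)) - Real.log (1+u*x) - θ*(Real.log (1-x) - Real.log x) := by
  set F : ℝ → ℝ :=
    fun z => Real.log (1+u*(1-z)) - Real.log (1+u*z) - θ*(Real.log (1-z) - Real.log z) with hF
  have hx0 : (0:ℝ) < x := by linarith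
  have h1x : x < 1 := by linarith
  rcases le_or_gt (θ*(1+u)) (x*(1-x)*(u^2+2*u-θ*u^2)) with hA | hB
  · -- strictly decreasing on [x, 1/2]
    have hD : (0:ℝ) < u^2+2*u-θ*u^2 := by
      by_contra hcon
      push_neg at hcon
      have hP : (0:ℝ) < x*(1-x) := by nlinarith
      have h1 : x*(1-x)*(u^2+2*u-θ*u^2) ≤ 0 := mul_nonpos_of_nonneg_of_nonpos hP.le hcon
      have hθ : θ ≤ 0 := by nlinarith
      nlinarith
    have hanti : StrictAntiOn F (Set.Icc x (1/2)) := by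
      apply strictAntiOn_of_deriv_neg (convex_Icc _ _)
      · intro z hz
        exact (F_hasDeriv u θ hu (by simp at hz; linarith [hz.1]) (by simp at hz; linarith [hz.2])).continuousAt.continuousWithinAt
      · intro z hz
        rw [interior_Icc] at hz
        obtain ⟨hz1, hz2⟩ := hz
        have hz0 : (0:ℝ) < z := by linarith
        have hz1' : z < 1 := by linarith
        rw [(F_hasDeriv u θ hu hz0 hz1').deriv, deriv_formula u θ z hu hz0 hz1']
        apply div_neg_of_neg_of_pos
        · have hPP : x*(1-x) < z*(1-z) := by nlinarith
          nlinarith [mul_lt_mul_of_pos_right hPP hD]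
        · have h1z : (0:ℝ) < 1 - z := by linarith
          have hA' : (0:ℝ) < 1 + u*(1-z) := by nlinarith
          have hB' : (0:ℝ) < 1 + u*z := by nlinarith
          positivity
    have hhalf : F (1/2 : ℝ) = 0 := by
      rw [hF]
      norm_num
    have hmem1 : x ∈ Set.Icc x (1/2:ℝ) := ⟨le_rfl, hx2.le⟩
    have hmem2 : (1/2:ℝ) ∈ Set.Icc x (1/2:ℝ) := ⟨hx2.le, le_rfl⟩
    have := hanti hmem1 hmem2 hx2
    rw [hhalf] at this
    exact this
  · -- monotone on [1/10, x]
    rcases eq_or_lt_of_le hx1 with heq | hlt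
    · rw [← heq]; exact hend
    · have hmono : MonotoneOn F (Set.Icc (1/10:ℝ) x) := by
        apply monotoneOn_of_deriv_nonneg (convex_Icc _ _)
        · intro z hz
          exact (F_hasDeriv u θ hu (by simp at hz; linarith [hz.1]) (by simp at hz; linarith [hz.2])).continuousAt.continuousWithinAt
        · intro z hz
          rw [interior_Icc] at hz
          exact (F_hasDeriv u θ hu (by linarith [hz.1]) (by linarith [hz.2])).differentiableAt.differentiableWithinAt
        · intro z hz
          rw [interior_Icc] at hz
          obtain ⟨hz1, hz2⟩ := hz
          have hz0 : (0:ℝ) < z := by linarith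
          have hz1' : z < 1 := by linarith
          rw [(F_hasDeriv u θ hu hz0 hz1').deriv, deriv_formula u θ z hu hz0 hz1']
          have h1z : (0:ℝ) < 1 - z := by linarith
          have hA' : (0:ℝ) < 1 + u*(1-z) := by nlinarith
          have hB' : (0:ℝ) < 1 + u*z := by nlinarith
          have hden : (0:ℝ) ≤ z*(1-z)*(1+u*(1-z))*(1+u*z) := by positivity
          have hPP : z*(1-z) < x*(1-x) := by nlinarith
          have hnum : (0:ℝ) ≤ θ*(1+u) - z*(1-z)*(u^2+2*u-θ*u^2) := by
            rcases le_or_gt 0 (u^2+2*u-θ*u^2) with hD | hD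
            · nlinarith [mul_le_mul_of_nonneg_right hPP.le hD]
            · have hu2 : (0:ℝ) < u^2 := by positivity
              have hθpos : (0:ℝ) < θ := by nlinarith [mul_pos hu hu]
              have hPz : (0:ℝ) < z*(1-z) := mul_pos hz0 h1z
              have hprod : z*(1-z)*(u^2+2*u-θ*u^2) ≤ 0 :=
                mul_nonpos_of_nonneg_of_nonpos hPz.le hD.le
              nlinarith [mul_pos hθpos (show (0:ℝ) < 1+u by linarith)]
          exact div_nonneg hnum hden
      have h10 : (1/10:ℝ) ∈ Set.Icc (1/10:ℝ) x := ⟨le_rfl, hx1⟩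
      have hxm : x ∈ Set.Icc (1/10:ℝ) x := ⟨hx1, le_rfl⟩
      have := hmono h10 hxm hx1
      calc (0:ℝ) < F (1/10) := hend
        _ ≤ F x := this

lemma core (pk t x : ℝ) (hpk2 : 2 ≤ pk) (ht0 : 0 < t)
    (hx0 : 0 < x) (hx2 : x < 1/2)
    (hFx : 0 < Real.log (1+(pk-1)*(1-x)) - Real.log (1+(pk-1)*x)
      - (t-1)*(Real.log (1-x) - Real.log x)) :
    (1-x)^(t*2) * x * (1+(pk-1)*x) + x^(t*2) * (1-x) * (1+(pk-1)*(1-x))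
      - (1-x)^t * x^t * (pk - 2*(pk-1)*(1-x)*x) < 0 := by
  have h1x : (0:ℝ) < 1-x := by linarith
  have ha0 := Real.rpow_pos_of_pos h1x t
  have hb0 := Real.rpow_pos_of_pos hx0 t
  have hba : x^t < (1-x)^t := Real.rpow_lt_rpow hx0.le (by linarith) ht0
  have hu0 : (0:ℝ) < pk - 1 := by linarith
  have hX : (0:ℝ) < x*(1+(pk-1)*x) :=
    mul_pos hx0 (by nlinarith [mul_pos hu0 hx0])
  have hY : (0:ℝ) < (1-x)*(1+(pk-1)*(1-x)) :=
    mul_pos h1x (by nlinarith [mul_pos hu0 h1x])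
  have haXbY : (1-x)^t*(x*(1+(pk-1)*x)) < x^t*((1-x)*(1+(pk-1)*(1-x))) := by
    rw [← Real.log_lt_log_iff (by positivity) (by positivity),
      Real.log_mul (by positivity) (by positivity), Real.log_mul (by positivity) (by positivity),
      Real.log_mul (by positivity) (by positivity), Real.log_mul (by positivity) (by positivity),
      Real.log_rpow h1x, Real.log_rpow hx0]
    nlinarith [hFx]
  have hrw1 : (1-x)^(t*2) = ((1-x)^t)^2 := by
    rw [← Real.rpow_natCast ((1-x)^t) 2, ← Real.rpow_mul h1x.le]
    norm_num
  have hrw2 : x^(t*2) = (x^t)^2 := by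
    rw [← Real.rpow_natCast (x^t) 2, ← Real.rpow_mul hx0.le]
    norm_num
  rw [hrw1, hrw2]
  have hkey : ((1-x)^t)^2 * x * (1+(pk-1)*x) + (x^t)^2 * (1-x) * (1+(pk-1)*(1-x))
      - (1-x)^t*x^t*(pk - 2*(pk-1)*(1-x)*x)
      = ((1-x)^t - x^t) * ((1-x)^t*(x*(1+(pk-1)*x)) - x^t*((1-x)*(1+(pk-1)*(1-x)))) := by
    ring
  rw [hkey]
  exact mul_neg_of_pos_of_neg (by linarith) (by linarith)

/-- For integer `k ≥ 2` and `p_k = log₂ C(2k,k)`, the coefficient function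
`c_k(x) = (1−x)^{2p_k/k} x (1+(p_k−1)x) + x^{2p_k/k} (1−x)(1+(p_k−1)(1−x))
− (1−x)^{p_k/k} x^{p_k/k} (p_k − 2(p_k−1)(1−x)x)` is negative on `[1/10, 1/2)`. -/
theorem ck_negative (k : ℕ) (hk : 2 ≤ k)
    (pk : ℝ) (hpk : pk = Real.logb 2 (Nat.choose (2 * k) k))
    (x : ℝ) (hx : x ∈ Set.Ico (1 / 10 : ℝ) (1 / 2)) :
    (1 - x) ^ (2 * pk / k) * x * (1 + (pk - 1) * x) +
      x ^ (2 * pk / k) * (1 - x) * (1 + (pk - 1) * (1 - x)) -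
      (1 - x) ^ (pk / k) * x ^ (pk / k) * (pk - 2 * (pk - 1) * (1 - x) * x) < 0 := by
  obtain ⟨hx1, hx2⟩ := hx
  have hx0 : (0:ℝ) < x := by linarith
  have hk0 : (0:ℝ) < (k:ℝ) := by positivity
  -- pk ≥ 2
  have hC4 : 4 ≤ (2*k).choose k := by
    calc 4 ≤ 2*k := by omega
      _ = (2*k).choose 1 := (Nat.choose_one_right _).symm
      _ ≤ (2*k).choose ((2*k)/2) := Nat.choose_le_middle 1 (2*k)
      _ = (2*k).choose k := by congr 1; omega
  have hpk2 : (2:ℝ) ≤ pk := by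
    rw [hpk]
    have := logb_nat_ge ((2*k).choose k) 2 1 (by norm_num) (by simpa using hC4)
    push_cast at this ⊢
    linarith
  -- logb computations
  have hcb_eq : (Nat.centralBinom k : ℝ) = ((2*k).choose k : ℝ) := by
    rw [Nat.centralBinom_eq_two_mul_choose]
  have hCpos : (0:ℝ) < ((2*k).choose k : ℝ) := by positivity
  have hlogb16 : Real.logb 2 ((16:ℝ)^k) = 4*(k:ℝ) := by
    rw [show (16:ℝ) = 2^(4:ℕ) by norm_num, ← pow_mul, Real.logb_pow,
      Real.logb_self_eq_one (by norm_num)]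
    push_cast; ring
  have hlogb4 : Real.logb 2 (4:ℝ) = 2 := by
    rw [show (4:ℝ) = 2^(2:ℕ) by norm_num, Real.logb_pow, Real.logb_self_eq_one (by norm_num)]
    norm_num
  have hup : Real.logb 2 ((2*k).choose k) ≤ 2*(k:ℝ) - Real.logb 2 (3*(k:ℝ)+1) / 2 := by
    have h := cb_upper k (by omega)
    rw [hcb_eq] at h
    have hmono := Real.logb_le_logb_of_le (show (1:ℝ) < 2 by norm_num)
      (show (0:ℝ) < ((2*k).choose k:ℝ)^2 * (3*(k:ℝ)+1) by positivity) h
    have e1 : Real.logb 2 (((2*k).choose k:ℝ)^2 * (3*(k:ℝ)+1))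
        = 2*Real.logb 2 ((2*k).choose k) + Real.logb 2 (3*(k:ℝ)+1) := by
      rw [Real.logb_mul (by positivity) (by positivity), Real.logb_pow]
      push_cast; ring
    rw [e1, hlogb16] at hmono
    linarith
  have hlo : 2*(k:ℝ) - 1 - Real.logb 2 k / 2 ≤ Real.logb 2 ((2*k).choose k) := by
    have h := cb_lower k (by omega)
    rw [hcb_eq] at h
    have hmono := Real.logb_le_logb_of_le (show (1:ℝ) < 2 by norm_num)
      (show (0:ℝ) < (16:ℝ)^k by positivity) h
    have e1 : Real.logb 2 ((4:ℝ)*(k:ℝ)*(((2*k).choose k:ℝ))^2)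
        = Real.logb 2 (4:ℝ) + Real.logb 2 (k:ℝ) + 2*Real.logb 2 ((2*k).choose k) := by
      rw [Real.logb_mul (by positivity) (by positivity),
        Real.logb_mul (by positivity) (by positivity), Real.logb_pow]
      push_cast; ring
    rw [show (4:ℝ)*(k:ℝ)*(((2*k).choose k:ℝ))^2 = 4*(k:ℝ)*(((2*k).choose k:ℝ))^2 by norm_num] at e1
    rw [e1, hlogb16, hlogb4] at hmono
    linarith
  -- endpoint inequality
  have hend0 := endpoint k hk hlo hup
  rw [← hpk] at hend0
  have hu0 : (0:ℝ) < pk - 1 := by linarith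
  have hend : 0 < Real.log (1+(pk-1)*(1-(1/10))) - Real.log (1+(pk-1)*(1/10))
      - (pk/(k:ℝ)-1)*(Real.log (1-(1/10)) - Real.log (1/10)) := by
    have hlog9 : Real.log (1-(1/10):ℝ) - Real.log (1/10:ℝ) = Real.log 9 := by
      rw [← Real.log_div (by norm_num) (by norm_num)]
      norm_num
    have hL : (0:ℝ) < (9:ℝ)^(pk/(k:ℝ)-1) * (1 + (pk-1)/10) := by
      have := Real.rpow_pos_of_pos (show (0:ℝ) < 9 by norm_num) (pk/(k:ℝ)-1)
      nlinarith
    have hloglt := Real.log_lt_log hL hend0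
    rw [Real.log_mul (by positivity) (by positivity), Real.log_rpow (by norm_num)] at hloglt
    have e1 : 1+(pk-1)*(1-(1/10):ℝ) = 1+9*(pk-1)/10 := by ring
    have e2 : 1+(pk-1)*(1/10:ℝ) = 1+(pk-1)/10 := by ring
    rw [hlog9, e1, e2]
    linarith
  have hFx := F_pos (pk-1) (pk/(k:ℝ)-1) hu0 hend x hx1 hx2
  have ht0 : (0:ℝ) < pk/(k:ℝ) := by positivity
  have := core pk (pk/(k:ℝ)) x hpk2 ht0 hx0 hx2 (by linarith [hFx])
  rw [show 2*pk/(k:ℝ) = (pk/(k:ℝ))*2 by ring]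
  exact this
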